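/- Fix real θ > 0, α > −1, set α' = (α+1)/θ − 1 and θ' = 1/θ. For every integer n ≥ 1 and all x_1,…,x_n > 0, setting u_i = x_i^{1/θ}, one has ∏_{i=1}^n u_i^α · det[𝒦^{(α,θ)}(u_i,u_j)]_{i,j=1}^n · ∏_{i=1}^n (1/θ) x_i^{1/θ−1} = ∏_{i=1}^n x_i^{α'} · det[𝒦^{(α',θ')}(x_i,x_j)]_{i,j=1}^n. In other words, the limit correlation measures ∏_i x_i^α det[𝒦^{(α,θ)}(x_i,x_j)] dx_1⋯dx_n of the biorthogonal Laguerre ensemble are invariant under the change of parameters (α,θ) ↦ ((α+1)/θ−1, 1/θ) combined with the transformation x ↦ x^{1/θ} of the phase space (0,∞). -/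

import Mathlib

/-- The limit kernel `𝒦^{(α,θ)}(x,y)` of the biorthogonal Jacobi/Laguerre ensembles. -/
noncomputable def limitKernel (α θ x y : ℝ) : ℝ :=
  ∑' k : ℕ, ∑' l : ℕ,
    ((-1) ^ k * x ^ k / ((Nat.factorial k : ℝ) * Real.Gamma ((α + 1 + k) / θ))) *
      ((-1) ^ l * y ^ (θ * (l : ℝ)) /
        ((Nat.factorial l : ℝ) * Real.Gamma (α + 1 + θ * l))) *
      (θ / (α + 1 + k + θ * l))

open Real Filter in
/-- Ratio-test summability of the single series building blocks of the limit kernel. -/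
lemma summable_aux {a b w : ℝ} (ha : 0 < a) (hb : 0 < b) (hw : 0 ≤ w) :
    Summable fun k : ℕ => w ^ k / (k.factorial * Real.Gamma (a + b * k)) := by
  apply summable_of_ratio_norm_eventually_le (r := 1/2) (by norm_num)
  have h1 : ∀ᶠ k : ℕ in atTop, 2 ≤ a + b * k := by
    filter_upwards [eventually_ge_atTop (Nat.ceil ((2:ℝ)/b))] with k hk
    have h : (2:ℝ)/b ≤ k := le_trans (Nat.le_ceil _) (by exact_mod_cast hk)
    have := (div_le_iff₀ hb).mp h
    nlinarith
  have h2 : ∀ᶠ k : ℕ in atTop, 2 * w ≤ k := by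
    filter_upwards [eventually_ge_atTop (Nat.ceil (2*w))] with k hk
    exact le_trans (Nat.le_ceil _) (by exact_mod_cast hk)
  filter_upwards [h1, h2] with k hk1 hk2
  have hg1 : 0 < Real.Gamma (a + b * k) := Real.Gamma_pos_of_pos (by linarith)
  have harg : a + b * k ≤ a + b * ((k:ℕ)+1 : ℕ) := by push_cast; nlinarith
  have hmem1 : (a + b * k) ∈ Set.Ici (2:ℝ) := hk1
  have hmem2 : (a + b * ((k:ℕ)+1 : ℕ)) ∈ Set.Ici (2:ℝ) := le_trans hk1 harg
  have hg2 : 0 < Real.Gamma (a + b * ((k:ℕ)+1 : ℕ)) :=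
    Real.Gamma_pos_of_pos (by linarith [hmem2])
  have hmono : Real.Gamma (a + b * k) ≤ Real.Gamma (a + b * ((k:ℕ)+1 : ℕ)) :=
    Real.Gamma_strictMonoOn_Ici.monotoneOn hmem1 hmem2 harg
  have hfpos : (0:ℝ) < k.factorial := by exact_mod_cast k.factorial_pos
  rw [Real.norm_eq_abs, Real.norm_eq_abs, abs_of_nonneg (by positivity),
    abs_of_nonneg (by positivity)]
  calc w ^ (k+1) / ((k+1).factorial * Real.Gamma (a + b * ((k:ℕ)+1 : ℕ)))
      = (w/((k:ℝ)+1)) * (w^k / (k.factorial * Real.Gamma (a + b * ((k:ℕ)+1 : ℕ)))) := by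
        rw [pow_succ, Nat.factorial_succ]
        push_cast
        field_simp
    _ ≤ (1/2) * (w^k / (k.factorial * Real.Gamma (a + b * k))) := by
        apply mul_le_mul
        · rw [div_le_iff₀ (by positivity)]; linarith
        · gcongr
        · positivity
        · norm_num

open Real Filter in
/-- Absolute summability of the double series defining the limit kernel. -/
lemma summable_kernel_uncurry {θ α u v : ℝ} (hθ : 0 < θ) (hα : -1 < α)
    (hu : 0 < u) (hv : 0 < v) :
    Summable (Function.uncurry fun k l : ℕ =>
      ((-1) ^ k * u ^ k / ((Nat.factorial k : ℝ) * Real.Gamma ((α + 1 + k) / θ))) *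
        ((-1) ^ l * v ^ (θ * (l : ℝ)) /
          ((Nat.factorial l : ℝ) * Real.Gamma (α + 1 + θ * l))) *
        (θ / (α + 1 + k + θ * l))) := by
  have h1 : (0:ℝ) < α + 1 := by linarith
  have hA : Summable fun k : ℕ => u ^ k / (k.factorial * Real.Gamma ((α + 1 + k) / θ)) := by
    refine (summable_aux (a := (α+1)/θ) (b := 1/θ) (w := u)
      (div_pos h1 hθ) (by positivity) hu.le).congr fun k => ?_
    have : (α+1)/θ + 1/θ * k = (α + 1 + k) / θ := by field_simp
    rw [this]
  have hB : Summable fun l : ℕ => (v ^ θ) ^ l / (l.factorial * Real.Gamma (α + 1 + θ * l)) := by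
    refine (summable_aux (a := α+1) (b := θ) (w := v ^ θ)
      h1 hθ (by positivity)).congr fun l => ?_
    norm_num
  have hAB := (hA.mul_of_nonneg hB (fun k => by positivity) (fun l => by positivity)).mul_left
    (θ / (α + 1))
  rw [← summable_abs_iff]
  refine Summable.of_nonneg_of_le (fun _ => abs_nonneg _) ?_ hAB
  rintro ⟨k, l⟩
  have hk0 : (0:ℝ) ≤ k := Nat.cast_nonneg k
  have hl0 : (0:ℝ) ≤ l := Nat.cast_nonneg l
  have hθl : (0:ℝ) ≤ θ * l := by positivity
  have hΓ1 : 0 < Real.Gamma ((α + 1 + k) / θ) :=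
    Real.Gamma_pos_of_pos (div_pos (by linarith) hθ)
  have hΓ2 : 0 < Real.Gamma (α + 1 + θ * l) := Real.Gamma_pos_of_pos (by linarith)
  have hD : (0:ℝ) < α + 1 + k + θ * l := by linarith
  have hvl : v ^ (θ * (l:ℝ)) = (v ^ θ) ^ l := by
    rw [Real.rpow_mul hv.le, Real.rpow_natCast]
  simp only [Function.uncurry]
  have heq : ((-1:ℝ) ^ k * u ^ k / ((Nat.factorial k : ℝ) * Real.Gamma ((α + 1 + k) / θ))) *
        ((-1) ^ l * v ^ (θ * (l : ℝ)) /
          ((Nat.factorial l : ℝ) * Real.Gamma (α + 1 + θ * l))) *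
        (θ / (α + 1 + k + θ * l))
      = (-1:ℝ) ^ (k + l) *
        ((u ^ k / ((Nat.factorial k : ℝ) * Real.Gamma ((α + 1 + k) / θ))) *
          ((v ^ θ) ^ l / ((Nat.factorial l : ℝ) * Real.Gamma (α + 1 + θ * l))) *
          (θ / (α + 1 + k + θ * l))) := by
    rw [hvl, pow_add]; ring
  rw [heq, abs_mul, abs_pow, abs_neg, abs_one, one_pow, one_mul,
    abs_of_nonneg (by positivity)]
  calc (u ^ k / ((Nat.factorial k : ℝ) * Real.Gamma ((α + 1 + k) / θ))) *
          ((v ^ θ) ^ l / ((Nat.factorial l : ℝ) * Real.Gamma (α + 1 + θ * l))) *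
          (θ / (α + 1 + k + θ * l))
      = (θ / (α + 1 + k + θ * l)) *
          ((u ^ k / ((Nat.factorial k : ℝ) * Real.Gamma ((α + 1 + k) / θ))) *
          ((v ^ θ) ^ l / ((Nat.factorial l : ℝ) * Real.Gamma (α + 1 + θ * l)))) := by ring
    _ ≤ (θ / (α + 1)) *
          ((u ^ k / ((Nat.factorial k : ℝ) * Real.Gamma ((α + 1 + k) / θ))) *
          ((v ^ θ) ^ l / ((Nat.factorial l : ℝ) * Real.Gamma (α + 1 + θ * l)))) := by
        refine mul_le_mul_of_nonneg_right
          (div_le_div_of_nonneg_left hθ.le h1 (by linarith)) (by positivity)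

open Real Filter in
/-- The key kernel symmetry: the limit kernel with parameters `((α+1)/θ - 1, 1/θ)`
is the transposed kernel with parameters `(α, θ)`, after `x ↦ x^{1/θ}` and
rescaling by `1/θ`. -/
lemma kernel_transform {θ α x y : ℝ} (hθ : 0 < θ) (hα : -1 < α)
    (hx : 0 < x) (hy : 0 < y) :
    limitKernel ((α + 1) / θ - 1) (1 / θ) x y
      = (1 / θ) * limitKernel α θ (y ^ (1 / θ)) (x ^ (1 / θ)) := by
  set u : ℝ := y ^ (1 / θ) with hu_def
  set v : ℝ := x ^ (1 / θ) with hv_def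
  have hu : 0 < u := Real.rpow_pos_of_pos hy _
  have hv : 0 < v := Real.rpow_pos_of_pos hx _
  set g : ℕ → ℕ → ℝ := fun k l =>
    ((-1) ^ k * u ^ k / ((Nat.factorial k : ℝ) * Real.Gamma ((α + 1 + k) / θ))) *
      ((-1) ^ l * v ^ (θ * (l : ℝ)) /
        ((Nat.factorial l : ℝ) * Real.Gamma (α + 1 + θ * l))) *
      (θ / (α + 1 + k + θ * l)) with hg_def
  have hsum : Summable (Function.uncurry g) := summable_kernel_uncurry hθ hα hu hv
  have hterm : ∀ k l : ℕ,
      ((-1) ^ k * x ^ k / ((Nat.factorial k : ℝ) *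
          Real.Gamma (((α + 1) / θ - 1 + 1 + k) / (1 / θ)))) *
        ((-1) ^ l * y ^ ((1 / θ) * (l : ℝ)) /
          ((Nat.factorial l : ℝ) * Real.Gamma ((α + 1) / θ - 1 + 1 + (1 / θ) * l))) *
        ((1 / θ) / ((α + 1) / θ - 1 + 1 + k + (1 / θ) * l))
      = (1 / θ) * g l k := by
    intro k l
    have hk0 : (0:ℝ) ≤ k := Nat.cast_nonneg k
    have hl0 : (0:ℝ) ≤ l := Nat.cast_nonneg l
    have hΓ1 : ((α + 1) / θ - 1 + 1 + (k:ℝ)) / (1 / θ) = α + 1 + θ * k := by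
      field_simp; ring
    have hΓ2 : (α + 1) / θ - 1 + 1 + (1 / θ) * (l:ℝ) = (α + 1 + l) / θ := by
      field_simp
      ring
    have hD : (0:ℝ) < α + 1 + l + θ * k := by nlinarith
    have hfrac : (1 / θ) / ((α + 1) / θ - 1 + 1 + (k:ℝ) + (1 / θ) * l)
        = (1 / θ) * (θ / (α + 1 + l + θ * k)) := by
      have h : (α + 1) / θ - 1 + 1 + (k:ℝ) + (1 / θ) * l = (α + 1 + l + θ * k) / θ := by
        field_simp; ring
      rw [h, div_div_eq_mul_div, mul_div_assoc]
    have hyl : y ^ ((1 / θ) * (l : ℝ)) = u ^ l := by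
      rw [hu_def, Real.rpow_mul hy.le, Real.rpow_natCast]
    have hxk : v ^ (θ * (k : ℝ)) = x ^ k := by
      rw [hv_def, ← Real.rpow_natCast x k, ← Real.rpow_mul hx.le]
      congr 1
      field_simp
    rw [hΓ1, hΓ2, hfrac, hyl, hg_def]
    simp only []
    rw [hxk]
    ring
  calc limitKernel ((α + 1) / θ - 1) (1 / θ) x y
      = ∑' k : ℕ, ∑' l : ℕ, (1 / θ) * g l k := by
        rw [limitKernel]
        exact tsum_congr fun k => tsum_congr fun l => hterm k l
    _ = (1 / θ) * ∑' k : ℕ, ∑' l : ℕ, g l k := by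
        simp only [tsum_mul_left]
    _ = (1 / θ) * ∑' l : ℕ, ∑' k : ℕ, g l k := by
        rw [Summable.tsum_comm hsum]
    _ = (1 / θ) * limitKernel α θ u v := by rw [limitKernel]

/-- **Invariance of the limit correlation measures of the biorthogonal Laguerre
ensemble** under `(α,θ) ↦ ((α+1)/θ - 1, 1/θ)` combined with `x ↦ x^{1/θ}`. -/
theorem laguerre_limit_measure_invariance (θ α : ℝ) (hθ : 0 < θ) (hα : -1 < α)
    (n : ℕ) (hn : 1 ≤ n) (x : Fin n → ℝ) (hx : ∀ i, 0 < x i) :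
    (∏ i, (x i ^ (1 / θ)) ^ α) *
        Matrix.det (Matrix.of fun i j : Fin n =>
          limitKernel α θ (x i ^ (1 / θ)) (x j ^ (1 / θ))) *
        (∏ i, (1 / θ) * x i ^ (1 / θ - 1))
      = (∏ i, x i ^ ((α + 1) / θ - 1)) *
          Matrix.det (Matrix.of fun i j : Fin n =>
            limitKernel ((α + 1) / θ - 1) (1 / θ) (x i) (x j)) := by
  set M : Matrix (Fin n) (Fin n) ℝ := Matrix.of fun i j : Fin n =>
    limitKernel α θ (x i ^ (1 / θ)) (x j ^ (1 / θ)) with hM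
  have hM' : (Matrix.of fun i j : Fin n =>
      limitKernel ((α + 1) / θ - 1) (1 / θ) (x i) (x j)) = (1 / θ) • M.transpose := by
    ext i j
    simp only [Matrix.of_apply, Matrix.smul_apply, Matrix.transpose_apply, hM, smul_eq_mul]
    exact kernel_transform hθ hα (hx i) (hx j)
  rw [hM', Matrix.det_smul, Matrix.det_transpose, Fintype.card_fin]
  have hprod2 : (∏ i, (1 / θ) * x i ^ (1 / θ - 1))
      = (1 / θ) ^ n * ∏ i, x i ^ (1 / θ - 1) := by
    rw [Finset.prod_mul_distrib, Finset.prod_const, Finset.card_univ, Fintype.card_fin]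
  have hprod : (∏ i, (x i ^ (1 / θ)) ^ α) * (∏ i, x i ^ (1 / θ - 1))
      = ∏ i, x i ^ ((α + 1) / θ - 1) := by
    rw [← Finset.prod_mul_distrib]
    refine Finset.prod_congr rfl fun i _ => ?_
    rw [← Real.rpow_mul (hx i).le, ← Real.rpow_add (hx i)]
    congr 1
    field_simp
    ring
  rw [hprod2]
  linear_combination ((1 / θ) ^ n * Matrix.det M) * hprod
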